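/- If the GF dimension of a countable collection C of infinite languages over U is infinite, then C cannot be uniformly generated with feedback. -/

import Mathlib

/-! STATEMENT 15: If the GF dimension of a countable collection C of infinite languages over U is infinite, then C cannot be uniformly generated with feedback. -/

/-- A generator strategy in the feedback model: `query h x` is the membership query
`y_t` issued after receiving input `x_t` with history `h` of completed rounds, and
`out h x y a` is the output `z_t` after the answer `a_t` to the query. -/
structure FGen (U : Type) where
  query : List (U × U × Bool × U) → U → U
  out : List (U × U × Bool × U) → U → U → Bool → U

/-- An adversary strategy in the feedback model: `inp h` is the next input `x_t`,
and `ans h x y` is the yes/no answer `a_t` to the generator's query `y_t`. -/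
structure FAdv (U : Type) where
  inp : List (U × U × Bool × U) → U
  ans : List (U × U × Bool × U) → U → U → Bool

/-- The history of the first `t` completed rounds `(x_s, y_s, a_s, z_s)` of the
interaction between `Adv` and `Gen`. -/
def fRun {U : Type} (Adv : FAdv U) (Gen : FGen U) : ℕ → List (U × U × Bool × U)
  | 0 => []
  | t + 1 =>
      let h := fRun Adv Gen t
      let x := Adv.inp h
      let y := Gen.query h x
      let a := Adv.ans h x y
      h ++ [(x, y, a, Gen.out h x y a)]

/-- The input `x_t` of round `t` (0-indexed) of the transcript T(Adv, Gen). -/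
def fX {U : Type} (Adv : FAdv U) (Gen : FGen U) (t : ℕ) : U :=
  Adv.inp (fRun Adv Gen t)

/-- The generator's query `y_t` of round `t`. -/
def fY {U : Type} (Adv : FAdv U) (Gen : FGen U) (t : ℕ) : U :=
  Gen.query (fRun Adv Gen t) (fX Adv Gen t)

/-- The adversary's answer `a_t` of round `t`. -/
def fA {U : Type} (Adv : FAdv U) (Gen : FGen U) (t : ℕ) : Bool :=
  Adv.ans (fRun Adv Gen t) (fX Adv Gen t) (fY Adv Gen t)

/-- The generator's output `z_t` of round `t`. -/
def fZ {U : Type} (Adv : FAdv U) (Gen : FGen U) (t : ℕ) : U :=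
  Gen.out (fRun Adv Gen t) (fX Adv Gen t) (fY Adv Gen t) (fA Adv Gen t)

/-- `S_r`: the set of distinct inputs among the first `r` rounds. -/
def fS {U : Type} (Adv : FAdv U) (Gen : FGen U) (r : ℕ) : Set U :=
  fX Adv Gen '' {t | t < r}

/-- The adversary strategy `Adv` is consistent with the language `K` (against `Gen`):
the inputs form an enumeration of `K` and every answer is truthful for `K`. -/
def fConsistent {U : Type} (Adv : FAdv U) (Gen : FGen U) (K : Set U) : Prop :=
  (∀ t, fX Adv Gen t ∈ K) ∧ (∀ w ∈ K, ∃ t, fX Adv Gen t = w) ∧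
    ∀ t, fA Adv Gen t = true ↔ fY Adv Gen t ∈ K

/-- `C_r(T)`: the languages of `C` consistent with the transcript up to round `r`
(inputs belong to the language and all answers are truthful for it). -/
def fCons {U : Type} (C : Set (Set U)) (Adv : FAdv U) (Gen : FGen U) (r : ℕ) :
    Set (Set U) :=
  {Lang ∈ C | ∀ t < r, fX Adv Gen t ∈ Lang ∧ (fA Adv Gen t = true ↔ fY Adv Gen t ∈ Lang)}

/-- The effective intersection `E_r(T)`. -/
def fE {U : Type} (C : Set (Set U)) (Adv : FAdv U) (Gen : FGen U) (r : ℕ) : Set U :=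
  ⋂₀ fCons C Adv Gen r \ fS Adv Gen r

/-- The GF dimension of `C`: the supremum of all `d ∈ ℕ` such that for every
generator strategy there are `K ∈ C` and an adversary strategy consistent with `K`
whose transcript has a finite round `r ≥ d` with `|S_r| ≥ d` and `E_r(T) = ∅`. -/
noncomputable def gfDim {U : Type} (C : Set (Set U)) : ℕ∞ :=
  sSup {e : ℕ∞ | ∃ d : ℕ, e = (d : ℕ∞) ∧
    ∀ Gen : FGen U, ∃ K ∈ C, ∃ Adv : FAdv U,
      fConsistent Adv Gen K ∧
      ∃ r : ℕ, d ≤ r ∧ d ≤ (fS Adv Gen r).ncard ∧ fE C Adv Gen r = ∅}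

/-- `C` can be uniformly generated with feedback: some generator strategy `Gen` and
bound `t*` are such that against every adversary consistent with any `K ∈ C`, the
output of every round `t` with `|S_t| ≥ t*` lies in `K \ S_t` (here `S_t` counts the
inputs up to and including round `t`). -/
def UniformGenWithFeedback {U : Type} (C : Set (Set U)) : Prop :=
  ∃ Gen : FGen U, ∃ tstar : ℕ,
    ∀ K ∈ C, ∀ Adv : FAdv U, fConsistent Adv Gen K →
      ∀ t : ℕ, tstar ≤ (fS Adv Gen (t + 1)).ncard →
        fZ Adv Gen t ∈ K \ fS Adv Gen (t + 1)

lemma fRun_length {U : Type} (Adv : FAdv U) (Gen : FGen U) (t : ℕ) :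
    (fRun Adv Gen t).length = t := by
  induction t with
  | zero => rfl
  | succ n ih => simp [fRun, ih]

theorem gfDim_infinite_implies_no_uniform_generation_with_feedback
    (U : Type) [Countable U] [Infinite U]
    (C : Set (Set U)) (hC : C.Countable) (hInf : ∀ L ∈ C, L.Infinite)
    (h : gfDim C = ⊤) :
    ¬ UniformGenWithFeedback C := by
  classical
  rintro ⟨Gen, tstar, hGen⟩
  -- Extract a witness d ≥ tstar + 1 from the unboundedness of the dimension set.
  set S : Set ℕ∞ := {e : ℕ∞ | ∃ d : ℕ, e = (d : ℕ∞) ∧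
    ∀ Gen : FGen U, ∃ K ∈ C, ∃ Adv : FAdv U,
      fConsistent Adv Gen K ∧
      ∃ r : ℕ, d ≤ r ∧ d ≤ (fS Adv Gen r).ncard ∧ fE C Adv Gen r = ∅} with hS
  have hex : ∃ e ∈ S, ((tstar + 1 : ℕ) : ℕ∞) ≤ e := by
    by_contra hc
    push_neg at hc
    have hb : sSup S ≤ ((tstar + 1 : ℕ) : ℕ∞) :=
      sSup_le fun e he => le_of_lt (hc e he)
    rw [show sSup S = gfDim C from rfl, h] at hb
    exact WithTop.coe_ne_top (top_le_iff.mp hb)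
  obtain ⟨e, ⟨d, rfl, hd⟩, hle⟩ := hex
  have hdle : tstar + 1 ≤ d := by exact_mod_cast hle
  obtain ⟨K, hK, Adv, hcons, r, hdr, hcard, hE⟩ := hd Gen
  have hr1 : 1 ≤ r := le_trans (le_trans (by omega) hdle) hdr
  obtain ⟨t0, rfl⟩ : ∃ t0, r = t0 + 1 := ⟨r - 1, by omega⟩
  set r := t0 + 1
  have hcardt : tstar ≤ (fS Adv Gen r).ncard := by omega
  have hz : fZ Adv Gen t0 ∈ K \ fS Adv Gen r := hGen K hK Adv hcons t0 hcardt
  set z := fZ Adv Gen t0 with hzdef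
  -- From E_r = ∅ and z ∉ S_r, find L ∈ C_r with z ∉ L.
  have hznot : z ∉ ⋂₀ fCons C Adv Gen r := by
    intro hmem
    have : z ∈ fE C Adv Gen r := ⟨hmem, hz.2⟩
    rw [hE] at this
    exact this
  rw [Set.mem_sInter] at hznot
  push_neg at hznot
  obtain ⟨L, hLcons, hzL⟩ := hznot
  obtain ⟨hLC, hLr⟩ := hLcons
  -- Enumerate L.
  have hLne : L.Nonempty := (hInf L hLC).nonempty
  obtain ⟨f, hf⟩ := (L.to_countable).exists_eq_range hLne
  -- Build an adversary consistent with L agreeing with Adv for the first r rounds.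
  set Adv' : FAdv U :=
    { inp := fun h => if h.length < r then Adv.inp h else f (h.length - r)
      ans := fun h x y => if h.length < r then Adv.ans h x y else decide (y ∈ L) }
    with hAdv'
  have hrun : ∀ t ≤ r, fRun Adv' Gen t = fRun Adv Gen t := by
    intro t ht
    induction t with
    | zero => rfl
    | succ n ih =>
      have hn : n ≤ r := by omega
      have ihn := ih hn
      have hlen : (fRun Adv Gen n).length < r := by rw [fRun_length]; omega
      simp only [fRun, ihn]
      simp only [hAdv', if_pos hlen]
  have hXlt : ∀ t < r, fX Adv' Gen t = fX Adv Gen t := by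
    intro t ht
    have hlen : (fRun Adv Gen t).length < r := by rw [fRun_length]; omega
    simp only [fX, hrun t (le_of_lt ht)]
    simp only [hAdv', if_pos hlen]
  have hYlt : ∀ t < r, fY Adv' Gen t = fY Adv Gen t := by
    intro t ht
    simp only [fY, hrun t (le_of_lt ht), hXlt t ht]
  have hAlt : ∀ t < r, fA Adv' Gen t = fA Adv Gen t := by
    intro t ht
    have hlen : (fRun Adv Gen t).length < r := by rw [fRun_length]; omega
    simp only [fA, hrun t (le_of_lt ht), hXlt t ht, hYlt t ht]
    simp only [hAdv', if_pos hlen]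
  have hZlt : ∀ t < r, fZ Adv' Gen t = fZ Adv Gen t := by
    intro t ht
    simp only [fZ, hrun t (le_of_lt ht), hXlt t ht, hYlt t ht, hAlt t ht]
  have hXge : ∀ t, r ≤ t → fX Adv' Gen t = f (t - r) := by
    intro t ht
    have hlen : ¬ (fRun Adv' Gen t).length < r := by rw [fRun_length]; omega
    simp only [fX, hAdv', if_neg hlen, fRun_length]
    rw [if_neg (by omega : ¬ t < r)]
  have hAge : ∀ t, r ≤ t → (fA Adv' Gen t = true ↔ fY Adv' Gen t ∈ L) := by
    intro t ht
    have hlen : ¬ (fRun Adv' Gen t).length < r := by rw [fRun_length]; omega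
    simp only [hAdv'] at hlen
    simp only [fA, hAdv', if_neg hlen, decide_eq_true_iff]
  -- Adv' is consistent with L.
  have hcons' : fConsistent Adv' Gen L := by
    refine ⟨?_, ?_, ?_⟩
    · intro t
      rcases lt_or_ge t r with htr | htr
      · rw [hXlt t htr]; exact (hLr t htr).1
      · rw [hXge t htr, hf]; exact Set.mem_range_self _
    · intro w hw
      rw [hf] at hw
      obtain ⟨n, rfl⟩ := hw
      exact ⟨n + r, by rw [hXge (n + r) (by omega)]; congr 1; omega⟩
    · intro t
      rcases lt_or_ge t r with htr | htr
      · rw [hAlt t htr, hYlt t htr]; exact (hLr t htr).2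
      · exact hAge t htr
  -- The runs agree through round r, so S'_r = S_r and z' = z.
  have hScard : (fS Adv' Gen r).ncard = (fS Adv Gen r).ncard := by
    congr 1
    unfold fS
    ext u
    simp only [Set.mem_image, Set.mem_setOf_eq]
    constructor
    · rintro ⟨t, htr, rfl⟩; exact ⟨t, htr, (hXlt t htr).symm⟩
    · rintro ⟨t, htr, rfl⟩; exact ⟨t, htr, hXlt t htr⟩
  have hz' : fZ Adv' Gen t0 ∈ L \ fS Adv' Gen r :=
    hGen L hLC Adv' hcons' t0 (by rw [hScard]; exact hcardt)
  have : z ∈ L := by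
    rw [hzdef, ← hZlt t0 (by omega)]
    exact hz'.1
  exact hzL this
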